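/- Let C = 4·(9 + 4√2)/(√(10 + 4√2) − 1). For all real numbers f_0 ≥ 0, f_1 > 0 and 0 < a ≤ b: max{ min{ 2·f_0/f_1 , (2√2 + 1)·√(f_0/a) } , (4 + √2)·√(b/a) } ≤ C · max{ 1 , (1/3)·√(b/a) , (1/4)·( √(f_0/a + f_1²/(4a²)) − f_1/(2a) ) }. Moreover C ≤ 19.828. -/

import Mathlib

lemma ub_lb_aux (s2 s x t w r : ℝ) (hs2 : s2 ^ 2 = 2) (hs2n : 0 ≤ s2)
    (hs : s ^ 2 = 10 + 4 * s2) (hsl : (3.95 : ℝ) ≤ s)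
    (hx : 0 ≤ x) (ht : 0 < t) (hwn : 0 ≤ w) (hw : w ^ 2 = x + t ^ 2)
    (hrn : 0 ≤ r) (hr : r ^ 2 = x) :
    min (x / t) ((2 * s2 + 1) * r) ≤ (1 + s) * (w - t) := by
  have hu : t ≤ w := by nlinarith [hw, hx, ht, hwn]
  rcases le_or_gt (w - t) ((s - 1) * t) with hcase | hcase
  · refine (min_le_left _ _).trans ?_
    rw [div_le_iff₀ ht]
    nlinarith [mul_le_mul_of_nonneg_left
      (show w + t ≤ (s + 1) * t by linarith)
      (show (0:ℝ) ≤ w - t by linarith)]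
  · refine (min_le_right _ _).trans ?_
    have e3 : ((2 * s2 + 1) * r) ^ 2 = (9 + 4 * s2) * x := by
      rw [mul_pow, hr]; linear_combination (4 * x) * hs2
    have e4 : (9 + 4 * s2 : ℝ) = (s - 1) * (s + 1) := by linear_combination -hs
    have e5 : x = (w - t) * (w + t) := by linear_combination (-1 : ℝ) * hw
    have hBn : (0:ℝ) ≤ (s + 1) * (w - t) := by
      apply mul_nonneg <;> linarith
    have h3 : ((2 * s2 + 1) * r) ^ 2 ≤ ((1 + s) * (w - t)) ^ 2 := by
      rw [e3, e4, e5]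
      nlinarith [mul_le_mul_of_nonneg_left
        (show (s - 1) * (w + t) ≤ (s + 1) * (w - t) by linarith) hBn]
    calc (2 * s2 + 1) * r
        = Real.sqrt (((2 * s2 + 1) * r) ^ 2) :=
          (Real.sqrt_sq (mul_nonneg (by linarith) hrn)).symm
      _ ≤ Real.sqrt (((1 + s) * (w - t)) ^ 2) := Real.sqrt_le_sqrt h3
      _ = (1 + s) * (w - t) := Real.sqrt_sq (by linarith)

/-- Proposition 2: the competitive-ratio upper bound of the Better-of-Two policy in
the single-FDC time-varying-cost setting exceeds the universal lower bound by at most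
the constant factor `C = 4(9 + 4√2)/(√(10 + 4√2) − 1)`, and `C ≤ 19.828`. -/
theorem ub_lb_ratio_single_varying
    (f₀ f₁ a b : ℝ) (hf₀ : 0 ≤ f₀) (hf₁ : 0 < f₁) (ha : 0 < a) (hab : a ≤ b) :
    max (min (2 * (f₀ / f₁)) ((2 * Real.sqrt 2 + 1) * Real.sqrt (f₀ / a)))
        ((4 + Real.sqrt 2) * Real.sqrt (b / a))
      ≤ (4 * (9 + 4 * Real.sqrt 2) / (Real.sqrt (10 + 4 * Real.sqrt 2) - 1)) *
        max (max 1 ((1 / 3) * Real.sqrt (b / a)))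
          ((1 / 4) * (Real.sqrt (f₀ / a + f₁ ^ 2 / (4 * a ^ 2)) - f₁ / (2 * a)))
    ∧ 4 * (9 + 4 * Real.sqrt 2) / (Real.sqrt (10 + 4 * Real.sqrt 2) - 1)
        ≤ 19.828 := by
  have ha' : a ≠ 0 := ne_of_gt ha
  have hf₁' : f₁ ≠ 0 := ne_of_gt hf₁
  have hs2 : Real.sqrt 2 ^ 2 = 2 := Real.sq_sqrt (by norm_num)
  have hs2n : (0:ℝ) ≤ Real.sqrt 2 := Real.sqrt_nonneg 2
  have hs2u : Real.sqrt 2 ≤ 1.414214 := by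
    nlinarith [sq_nonneg (Real.sqrt 2 - 1.414214)]
  have hs2l : (1.414:ℝ) ≤ Real.sqrt 2 := by nlinarith [hs2, hs2n]
  have hs : Real.sqrt (10 + 4 * Real.sqrt 2) ^ 2 = 10 + 4 * Real.sqrt 2 :=
    Real.sq_sqrt (by nlinarith)
  have hsn : (0:ℝ) ≤ Real.sqrt (10 + 4 * Real.sqrt 2) := Real.sqrt_nonneg _
  have hsu : Real.sqrt (10 + 4 * Real.sqrt 2) ≤ 3.957 := by
    nlinarith [sq_nonneg (Real.sqrt (10 + 4 * Real.sqrt 2) - 3.95688)]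
  have hsl : (3.95:ℝ) ≤ Real.sqrt (10 + 4 * Real.sqrt 2) := by
    nlinarith [hs, hsn]
  have hC : 4 * (9 + 4 * Real.sqrt 2) / (Real.sqrt (10 + 4 * Real.sqrt 2) - 1)
      = 4 * (1 + Real.sqrt (10 + 4 * Real.sqrt 2)) := by
    rw [div_eq_iff (by linarith)]
    linear_combination (-4 : ℝ) * hs
  rw [hC]
  constructor
  · rw [show f₀ / a + f₁ ^ 2 / (4 * a ^ 2) = f₀ / a + (f₁ / (2 * a)) ^ 2 by
        field_simp; ring,
      show 2 * (f₀ / f₁) = (f₀ / a) / (f₁ / (2 * a)) by field_simp]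
    have hx : 0 ≤ f₀ / a := div_nonneg hf₀ ha.le
    have ht : 0 < f₁ / (2 * a) := div_pos hf₁ (by linarith)
    have hmin := ub_lb_aux (Real.sqrt 2) (Real.sqrt (10 + 4 * Real.sqrt 2))
      (f₀ / a) (f₁ / (2 * a))
      (Real.sqrt (f₀ / a + (f₁ / (2 * a)) ^ 2)) (Real.sqrt (f₀ / a))
      hs2 hs2n hs hsl hx ht (Real.sqrt_nonneg _)
      (Real.sq_sqrt (by positivity)) (Real.sqrt_nonneg _) (Real.sq_sqrt hx)
    apply max_le
    · calc min ((f₀ / a) / (f₁ / (2 * a))) ((2 * Real.sqrt 2 + 1) * Real.sqrt (f₀ / a))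
          ≤ (1 + Real.sqrt (10 + 4 * Real.sqrt 2)) *
              (Real.sqrt (f₀ / a + (f₁ / (2 * a)) ^ 2) - f₁ / (2 * a)) := hmin
        _ = 4 * (1 + Real.sqrt (10 + 4 * Real.sqrt 2)) *
              (1 / 4 * (Real.sqrt (f₀ / a + (f₁ / (2 * a)) ^ 2) - f₁ / (2 * a))) := by
            ring
        _ ≤ 4 * (1 + Real.sqrt (10 + 4 * Real.sqrt 2)) *
              max (max 1 (1 / 3 * Real.sqrt (b / a)))
                (1 / 4 * (Real.sqrt (f₀ / a + (f₁ / (2 * a)) ^ 2) - f₁ / (2 * a))) :=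
            mul_le_mul_of_nonneg_left (le_max_right _ _) (by linarith)
    · have hba : 0 ≤ Real.sqrt (b / a) := Real.sqrt_nonneg _
      calc (4 + Real.sqrt 2) * Real.sqrt (b / a)
          ≤ 4 * (1 + Real.sqrt (10 + 4 * Real.sqrt 2)) * (1 / 3) * Real.sqrt (b / a) :=
            mul_le_mul_of_nonneg_right (by linarith) hba
        _ = 4 * (1 + Real.sqrt (10 + 4 * Real.sqrt 2)) *
              (1 / 3 * Real.sqrt (b / a)) := by ring
        _ ≤ 4 * (1 + Real.sqrt (10 + 4 * Real.sqrt 2)) *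
              max (max 1 (1 / 3 * Real.sqrt (b / a)))
                (1 / 4 * (Real.sqrt (f₀ / a + (f₁ / (2 * a)) ^ 2) - f₁ / (2 * a))) :=
            mul_le_mul_of_nonneg_left
              (le_trans (le_max_right 1 _) (le_max_left _ _)) (by linarith)
  · linarith
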